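/- Fix σ > 1 and define φ_σ(t) = t^{σ/(σ−1)} / W(t)^{1/(σ−1)} for t > 0, φ_σ(0) = 0. Then ω(t) = φ_σ(ln_+ |t|) satisfies: ω(2t) = O(ω(t)) as t → ∞, ω(t) = O(t) as t → ∞, and ln t = o(ω(t)) as t → ∞. -/

import Mathlib

open Real Filter Asymptotics

private lemma gmono : ∀ z1 z2 : ℝ, 0 ≤ z1 → z1 < z2 → z1 * Real.exp z1 < z2 * Real.exp z2 := by
  intro z1 z2 h1 h2
  have h3 : Real.exp z1 < Real.exp z2 := Real.exp_lt_exp.2 h2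
  nlinarith [Real.exp_pos z1, Real.exp_pos z2]

section
variable {W : ℝ → ℝ} (hW : ∀ y : ℝ, 0 ≤ y → 0 ≤ W y ∧ W y * Real.exp (W y) = y)

include hW

private lemma Wpos {y : ℝ} (hy : 0 < y) : 0 < W y := by
  obtain ⟨h1, h2⟩ := hW y hy.le
  rcases h1.lt_or_eq with h | h
  · exact h
  · exfalso
    rw [← h] at h2
    simp at h2
    linarith

private lemma Wmono {x y : ℝ} (hx : 0 ≤ x) (hxy : x ≤ y) : W x ≤ W y := by
  obtain ⟨h1, h2⟩ := hW x hx
  obtain ⟨h3, h4⟩ := hW y (hx.trans hxy)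
  by_contra h
  push_neg at h
  have := gmono (W y) (W x) h3 h
  rw [h2, h4] at this
  linarith

private lemma WeM {M : ℝ} (hM : 0 ≤ M) : W (M * Real.exp M) = M := by
  have hy : 0 ≤ M * Real.exp M := mul_nonneg hM (Real.exp_pos M).le
  obtain ⟨h1, h2⟩ := hW _ hy
  rcases lt_trichotomy (W (M * Real.exp M)) M with h | h | h
  · have := gmono _ _ h1 h
    rw [h2] at this; linarith
  · exact h
  · have := gmono _ _ hM h
    rw [h2] at this; linarith

private lemma Wtend : Tendsto W atTop atTop := by
  rw [tendsto_atTop_atTop]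
  intro b
  refine ⟨max 0 b * Real.exp (max 0 b), fun y hy => ?_⟩
  have h0 : (0:ℝ) ≤ max 0 b := le_max_left _ _
  calc b ≤ max 0 b := le_max_right _ _
    _ = W (max 0 b * Real.exp (max 0 b)) := (WeM hW h0).symm
    _ ≤ W y := Wmono hW (mul_nonneg h0 (Real.exp_pos _).le) hy

private lemma Wexp {y : ℝ} (hy : 0 < y) : W y = y * Real.exp (-(W y)) := by
  obtain ⟨h1, h2⟩ := hW y hy.le
  rw [Real.exp_neg]
  field_simp
  linarith

end

/-- ω(t) = φ_σ(ln_+ |t|) satisfies ω(2t) = O(ω(t)), ω(t) = O(t) and ln t = o(ω(t)) as t → ∞. -/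
theorem stmt_17 (W : ℝ → ℝ)
    (hW : ∀ y : ℝ, 0 ≤ y → 0 ≤ W y ∧ W y * Real.exp (W y) = y)
    (σ : ℝ) (hσ : 1 < σ)
    (φ : ℝ → ℝ) (hφ0 : φ 0 = 0)
    (hφ : ∀ t : ℝ, 0 < t → φ t = t ^ (σ / (σ - 1)) / (W t) ^ (1 / (σ - 1)))
    (ω : ℝ → ℝ) (hω : ∀ t : ℝ, ω t = φ (max 0 (Real.log |t|))) :
    (fun t : ℝ => ω (2 * t)) =O[Filter.atTop] ω ∧
    ω =O[Filter.atTop] (fun t : ℝ => t) ∧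
    (fun t : ℝ => Real.log t) =o[Filter.atTop] ω := by
  have hs1 : (0:ℝ) < σ - 1 := by linarith
  set a : ℝ := 1 / (σ - 1) with ha_def
  have ha : 0 < a := by positivity
  have hsa : σ / (σ - 1) = 1 + a := by
    rw [ha_def]
    field_simp
    ring
  -- formula for ω on large t
  have hform : ∀ t : ℝ, 3 ≤ t →
      ω t = (Real.log t) ^ (1 + a) / (W (Real.log t)) ^ a := by
    intro t ht
    have ht0 : (0:ℝ) < t := by linarith
    have hL : 0 < Real.log t := Real.log_pos (by linarith)
    rw [hω, abs_of_pos ht0, max_eq_right hL.le, hφ _ hL, hsa]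
  -- positivity of ω on large t
  have hωpos : ∀ t : ℝ, 3 ≤ t → 0 < ω t := by
    intro t ht
    have hL : 0 < Real.log t := Real.log_pos (by linarith)
    rw [hform t ht]
    exact div_pos (Real.rpow_pos_of_pos hL _) (Real.rpow_pos_of_pos (Wpos hW hL) _)
  constructor
  · -- ω(2t) = O(ω t)
    apply IsBigO.of_bound (2 ^ (1 + a))
    filter_upwards [eventually_ge_atTop (3:ℝ)] with t ht
    have ht0 : (0:ℝ) < t := by linarith
    have hL : 0 < Real.log t := Real.log_pos (by linarith)
    have hL1 : 1 ≤ Real.log t := by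
      have : Real.exp 1 ≤ 3 := by
        nlinarith [Real.exp_one_lt_d9]
      calc (1:ℝ) = Real.log (Real.exp 1) := (Real.log_exp 1).symm
        _ ≤ Real.log t := Real.log_le_log (Real.exp_pos 1) (this.trans ht)
    have h2t : (3:ℝ) ≤ 2 * t := by linarith
    have hlog2t : Real.log (2 * t) = Real.log 2 + Real.log t :=
      Real.log_mul (by norm_num) ht0.ne'
    have hlog2 : Real.log 2 ≤ 1 := by
      have := Real.log_le_sub_one_of_pos (show (0:ℝ) < 2 by norm_num)
      linarith
    have hLl : Real.log (2 * t) ≤ 2 * Real.log t := by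
      rw [hlog2t]; linarith
    have hL2 : 0 < Real.log (2 * t) := by rw [hlog2t]; positivity
    have hWL : 0 < W (Real.log t) := Wpos hW hL
    have hWmono : W (Real.log t) ≤ W (Real.log (2 * t)) :=
      Wmono hW hL.le (by rw [hlog2t]; linarith [Real.log_pos (show (1:ℝ)<2 by norm_num)])
    rw [hform _ ht, hform _ h2t]
    have key : Real.log (2*t) ^ (1+a) / W (Real.log (2*t)) ^ a
        ≤ (2 * Real.log t) ^ (1+a) / W (Real.log t) ^ a := by
      apply div_le_div₀ (Real.rpow_nonneg (by linarith) _)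
        (Real.rpow_le_rpow hL2.le hLl (by positivity))
        (Real.rpow_pos_of_pos hWL _)
        (Real.rpow_le_rpow hWL.le hWmono ha.le)
    have hmul : (2 * Real.log t) ^ (1+a) = 2 ^ (1+a) * Real.log t ^ (1+a) :=
      Real.mul_rpow (by norm_num) hL.le
    have hnn1 : 0 ≤ Real.log (2*t) ^ (1+a) / W (Real.log (2*t)) ^ a :=
      div_nonneg (Real.rpow_nonneg hL2.le _)
        (Real.rpow_nonneg (hWL.trans_le hWmono).le _)
    have hnn2 : 0 ≤ Real.log t ^ (1+a) / W (Real.log t) ^ a :=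
      div_nonneg (Real.rpow_nonneg hL.le _) (Real.rpow_nonneg hWL.le _)
    rw [Real.norm_of_nonneg hnn1, Real.norm_of_nonneg hnn2]
    calc Real.log (2*t) ^ (1+a) / W (Real.log (2*t)) ^ a
        ≤ (2 * Real.log t) ^ (1+a) / W (Real.log t) ^ a := key
      _ = 2 ^ (1+a) * (Real.log t ^ (1+a) / W (Real.log t) ^ a) := by
          rw [hmul]; ring
  constructor
  · -- ω = O(t)
    have h1 : ω =O[atTop] fun t : ℝ => Real.log t ^ (1 + a) := by
      apply IsBigO.of_bound 1
      filter_upwards [eventually_ge_atTop (3:ℝ),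
        Real.tendsto_log_atTop.eventually_ge_atTop (Real.exp 1)] with t ht hte
      have hL : 0 < Real.log t := Real.log_pos (by linarith)
      have hWe : (1:ℝ) ≤ W (Real.log t) := by
        have := WeM hW (show (0:ℝ) ≤ 1 by norm_num)
        rw [one_mul] at this
        calc (1:ℝ) = W (Real.exp 1) := this.symm
          _ ≤ W (Real.log t) := Wmono hW (Real.exp_pos 1).le hte
      have hWa : (1:ℝ) ≤ W (Real.log t) ^ a := by
        calc (1:ℝ) = 1 ^ a := (Real.one_rpow a).symm
          _ ≤ W (Real.log t) ^ a := Real.rpow_le_rpow (by norm_num) hWe ha.le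
      rw [hform t ht, Real.norm_of_nonneg (by positivity),
        Real.norm_of_nonneg (by positivity), one_mul]
      exact div_le_self (by positivity) hWa
    have h2 : (fun t : ℝ => Real.log t ^ (1 + a)) =o[atTop] fun t : ℝ => t ^ (1:ℝ) :=
      isLittleO_log_rpow_rpow_atTop _ one_pos
    have h3 : (fun t : ℝ => t ^ (1:ℝ)) =ᶠ[atTop] fun t : ℝ => t := by
      filter_upwards with t using Real.rpow_one t
    exact h1.trans ((h2.isBigO).congr' (EventuallyEq.refl _ _) h3)
  · -- log = o(ω)
    rw [isLittleO_iff_tendsto']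
    · have hWt : Tendsto (fun t : ℝ => W (Real.log t)) atTop atTop :=
        (Wtend hW).comp Real.tendsto_log_atTop
      have hexp : Tendsto (fun t : ℝ => Real.exp (-(W (Real.log t) * a))) atTop (nhds 0) :=
        Real.tendsto_exp_neg_atTop_nhds_zero.comp (hWt.atTop_mul_const ha)
      apply hexp.congr'
      filter_upwards [eventually_ge_atTop (3:ℝ)] with t ht
      have hL : 0 < Real.log t := Real.log_pos (by linarith)
      have hWL : 0 < W (Real.log t) := Wpos hW hL
      rw [hform t ht]
      have hsplit : Real.log t ^ (1 + a) = Real.log t * Real.log t ^ a := by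
        rw [Real.rpow_add hL, Real.rpow_one]
      have hW1 : W (Real.log t) / Real.log t = Real.exp (-(W (Real.log t))) := by
        obtain ⟨-, h2⟩ := hW (Real.log t) hL.le
        rw [Real.exp_neg]
        field_simp
        linarith
      have hgoal : Real.log t / (Real.log t ^ (1 + a) / W (Real.log t) ^ a)
          = (W (Real.log t) / Real.log t) ^ a := by
        rw [hsplit, Real.div_rpow hWL.le hL.le]
        have hLa : 0 < Real.log t ^ a := Real.rpow_pos_of_pos hL a
        have hWa : 0 < W (Real.log t) ^ a := Real.rpow_pos_of_pos hWL a
        field_simp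
      rw [hgoal, hW1, ← Real.exp_mul, neg_mul]
    · filter_upwards [eventually_ge_atTop (3:ℝ)] with t ht h0
      exact absurd h0 (hωpos t ht).ne'
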